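/- If a graph G with integer edge weights is Hadamard diagonalizable, then G is regular: all diagonal entries of its Laplacian L are equal, and each equals (1/n) times the sum of the eigenvalues of L. -/
import Mathlib


open Matrix

theorem hadamard_diag_regular (n : ℕ)
    (A : Matrix (Fin n) (Fin n) ℤ) (hAsymm : A.IsSymm) (hAdiag : ∀ i, A i i = 0)
    (L : Matrix (Fin n) (Fin n) ℤ)
    (hL : L = Matrix.diagonal (fun i => ∑ j, A i j) - A)
    (H : Matrix (Fin n) (Fin n) ℝ)
    (hent : ∀ i j, H i j = 1 ∨ H i j = -1)
    (hH : H * Hᵀ = (n : ℝ) • 1)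
    (Λ : Fin n → ℝ)
    (hdiag : L.map (fun x => (x : ℝ)) = ((n : ℝ))⁻¹ • (H * Matrix.diagonal Λ * Hᵀ)) :
    (∀ j k : Fin n, L j j = L k k) ∧
    (∀ j : Fin n, ((L j j : ℤ) : ℝ) = ((n : ℝ))⁻¹ * ∑ i, Λ i) := by
  have key : ∀ j : Fin n, ((L j j : ℤ) : ℝ) = ((n : ℝ))⁻¹ * ∑ i, Λ i := by
    intro j
    have h1 : ((L j j : ℤ) : ℝ) = (L.map (fun x => (x : ℝ))) j j := rfl
    have hsq : ∀ i, H j i * Λ i * H j i = Λ i := by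
      intro i
      rcases hent j i with h | h <;> rw [h] <;> ring
    have h2 : (H * Matrix.diagonal Λ * Hᵀ) j j = ∑ i, Λ i := by
      rw [Matrix.mul_apply]
      simp_rw [Matrix.mul_diagonal, Matrix.transpose_apply, hsq]
    rw [h1, hdiag, Matrix.smul_apply, h2, smul_eq_mul]
  refine ⟨fun j k => ?_, key⟩
  exact_mod_cast (key j).trans (key k).symm
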